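/- (Rank inequality.) Let A and B be N×N Hermitian matrices, and define their empirical spectral distributions F^A(x) = #{1 ≤ i ≤ N : λ_i(A) ≤ x}/N and F^B(x) = #{1 ≤ i ≤ N : λ_i(B) ≤ x}/N, where λ_1(·) ≤ ⋯ ≤ λ_N(·) are the eigenvalues with multiplicity. Then sup_{x∈ℝ} |F^A(x) − F^B(x)| ≤ rank(A − B)/N. -/

import Mathlib

open Matrix Finset

noncomputable section

namespace RankIneqAux


variable {N : ℕ}

/-- The coordinate subspace of vectors supported on `s`. -/
def coordSub (N : ℕ) (s : Finset (Fin N)) : Submodule ℂ (Fin N → ℂ) where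
  carrier := {w | ∀ i ∉ s, w i = 0}
  add_mem' := by intro a b ha hb i hi; simp [ha i hi, hb i hi]
  zero_mem' := by intro i hi; rfl
  smul_mem' := by intro c a ha i hi; simp [ha i hi]

lemma mem_coordSub {s : Finset (Fin N)} {w : Fin N → ℂ} :
    w ∈ coordSub N s ↔ ∀ i ∉ s, w i = 0 := Iff.rfl

def coordSubEquiv (s : Finset (Fin N)) : coordSub N s ≃ₗ[ℂ] (s → ℂ) where
  toFun w i := w.1 i
  map_add' a b := rfl
  map_smul' c a := rfl
  invFun f := ⟨fun i => if h : i ∈ s then f ⟨i, h⟩ else 0, by intro i hi; simp [hi]⟩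
  left_inv := by
    rintro ⟨w, hw⟩; ext i; by_cases h : i ∈ s
    · simp [h]
    · simp [h, hw i h]
  right_inv := by intro f; ext i; simp

lemma finrank_coordSub (s : Finset (Fin N)) :
    Module.finrank ℂ (coordSub N s) = s.card := by
  rw [(coordSubEquiv s).finrank_eq, Module.finrank_fintype_fun_eq_card, Fintype.card_coe]



variable {N : ℕ}

/-- The linear equivalence `v ↦ star U *ᵥ v` for a unitary `U`. -/
def unitaryEquiv (U : Matrix.unitaryGroup (Fin N) ℂ) : (Fin N → ℂ) ≃ₗ[ℂ] (Fin N → ℂ) :=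
  LinearEquiv.ofLinear
    (Matrix.mulVecLin (star (U : Matrix (Fin N) (Fin N) ℂ)))
    (Matrix.mulVecLin (U : Matrix (Fin N) (Fin N) ℂ))
    (by rw [← Matrix.mulVecLin_mul, U.2.1, Matrix.mulVecLin_one])
    (by rw [← Matrix.mulVecLin_mul, U.2.2, Matrix.mulVecLin_one])

lemma unitaryEquiv_apply (U : Matrix.unitaryGroup (Fin N) ℂ) (v : Fin N → ℂ) :
    unitaryEquiv U v = star (U : Matrix (Fin N) (Fin N) ℂ) *ᵥ v := rfl

lemma selfDot (u : Fin N → ℂ) :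
    star u ⬝ᵥ u = ((∑ i, Complex.normSq (u i) : ℝ) : ℂ) := by
  rw [dotProduct]
  push_cast
  refine Finset.sum_congr rfl fun i _ => ?_
  simp only [Pi.star_apply, RCLike.star_def]
  rw [mul_comm, Complex.mul_conj]

lemma norm_preserved (U : Matrix.unitaryGroup (Fin N) ℂ) (v : Fin N → ℂ) :
    ∑ i, Complex.normSq ((star (U : Matrix (Fin N) (Fin N) ℂ) *ᵥ v) i)
      = ∑ i, Complex.normSq (v i) := by
  have h : star (star (U : Matrix (Fin N) (Fin N) ℂ) *ᵥ v) ⬝ᵥ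
      (star (U : Matrix (Fin N) (Fin N) ℂ) *ᵥ v) = star v ⬝ᵥ v := by
    rw [Matrix.star_mulVec, Matrix.star_eq_conjTranspose, Matrix.conjTranspose_conjTranspose,
      ← Matrix.dotProduct_mulVec, Matrix.mulVec_mulVec, ← Matrix.star_eq_conjTranspose,
      U.2.2, Matrix.one_mulVec]
  rw [selfDot, selfDot] at h
  exact_mod_cast h

/-- Quadratic form of a Hermitian matrix via its eigenvalues. -/
lemma quad {A : Matrix (Fin N) (Fin N) ℂ} (hA : A.IsHermitian) (v : Fin N → ℂ) :
    star v ⬝ᵥ (A *ᵥ v)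
      = ((∑ i, hA.eigenvalues i *
          Complex.normSq ((star (hA.eigenvectorUnitary : Matrix (Fin N) (Fin N) ℂ) *ᵥ v) i) : ℝ) : ℂ) := by
  set U := (hA.eigenvectorUnitary : Matrix (Fin N) (Fin N) ℂ) with hU
  set w := star U *ᵥ v with hw
  conv_lhs => rw [hA.spectral_theorem, Unitary.conjStarAlgAut_apply]
  rw [← Matrix.mulVec_mulVec, ← Matrix.mulVec_mulVec, Matrix.dotProduct_mulVec]
  have hs : star v ᵥ* U = star w := by
    rw [hw, Matrix.star_mulVec, Matrix.star_eq_conjTranspose, Matrix.conjTranspose_conjTranspose]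
  rw [hs, dotProduct]
  push_cast
  refine Finset.sum_congr rfl fun i _ => ?_
  rw [Matrix.mulVec_diagonal]
  have key : ∀ (r : ℝ) (z : ℂ), star z * ((r : ℂ) * z) = ((r * Complex.normSq z : ℝ) : ℂ) := by
    intro r z
    rw [RCLike.star_def, show (starRingEnd ℂ) z * ((r : ℂ) * z)
        = (r : ℂ) * (z * (starRingEnd ℂ) z) by ring, Complex.mul_conj]
    push_cast
    ring
  have : ((RCLike.ofReal ∘ hA.eigenvalues) i : ℂ) = (hA.eigenvalues i : ℂ) := rfl
  rw [Pi.star_apply, this, key]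
  push_cast
  ring


lemma rank_neg' (M : Matrix (Fin N) (Fin N) ℂ) : (-M).rank = M.rank := by
  rw [Matrix.rank, Matrix.rank]
  have h : (-M).mulVecLin = -(M.mulVecLin) := by
    ext v i
    simp [Matrix.neg_mulVec]
  rw [h, LinearMap.range_neg]

lemma core (N : ℕ) (A B : Matrix (Fin N) (Fin N) ℂ)
    (hA : A.IsHermitian) (hB : B.IsHermitian) (x : ℝ) :
    (Finset.univ.filter fun i : Fin N => hA.eigenvalues i ≤ x).card ≤
      (Finset.univ.filter fun i : Fin N => hB.eigenvalues i ≤ x).card + (A - B).rank := by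
  by_contra hcon
  push_neg at hcon
  set sA := Finset.univ.filter (fun i : Fin N => hA.eigenvalues i ≤ x) with hsA
  set sB := Finset.univ.filter (fun i : Fin N => x < hB.eigenvalues i) with hsB
  set kB := (Finset.univ.filter fun i : Fin N => hB.eigenvalues i ≤ x).card with hkB
  have hcard : kB + sB.card = N := by
    have h := Finset.card_filter_add_card_filter_not
      (s := (Finset.univ : Finset (Fin N))) (p := fun i => hB.eigenvalues i ≤ x)
    simp only [not_le, Finset.card_univ, Fintype.card_fin] at h
    rw [hkB, hsB]
    convert h using 3
  set V : Submodule ℂ (Fin N → ℂ) :=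
    Submodule.comap (unitaryEquiv hA.eigenvectorUnitary).toLinearMap (coordSub N sA) with hV
  set W : Submodule ℂ (Fin N → ℂ) :=
    Submodule.comap (unitaryEquiv hB.eigenvectorUnitary).toLinearMap (coordSub N sB) with hW
  set K : Submodule ℂ (Fin N → ℂ) := LinearMap.ker (A - B).mulVecLin with hK
  have fV : Module.finrank ℂ V = sA.card := by
    rw [hV, Submodule.comap_equiv_eq_map_symm, LinearEquiv.finrank_map_eq, finrank_coordSub]
  have fW : Module.finrank ℂ W = sB.card := by
    rw [hW, Submodule.comap_equiv_eq_map_symm, LinearEquiv.finrank_map_eq, finrank_coordSub]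
  have fK : Module.finrank ℂ K + (A - B).rank = N := by
    have h := LinearMap.finrank_range_add_finrank_ker (A - B).mulVecLin
    rw [Module.finrank_fintype_fun_eq_card, Fintype.card_fin] at h
    rw [hK, Matrix.rank] at *
    omega
  have htop : Module.finrank ℂ (Fin N → ℂ) = N := by
    rw [Module.finrank_fintype_fun_eq_card, Fintype.card_fin]
  have h1 : Module.finrank ℂ ↥(W ⊓ K) + N ≥ Module.finrank ℂ W + Module.finrank ℂ K := by
    have := Submodule.finrank_sup_add_finrank_inf_eq W K
    have hle := Submodule.finrank_le (W ⊔ K)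
    rw [htop] at hle
    omega
  have h2 : Module.finrank ℂ ↥(V ⊓ (W ⊓ K)) + N ≥
      Module.finrank ℂ V + Module.finrank ℂ ↥(W ⊓ K) := by
    have := Submodule.finrank_sup_add_finrank_inf_eq V (W ⊓ K)
    have hle := Submodule.finrank_le (V ⊔ (W ⊓ K))
    rw [htop] at hle
    omega
  have hkAle : sA.card ≤ N := by
    simpa using Finset.card_le_card (Finset.subset_univ sA)
  have hpos : 0 < Module.finrank ℂ ↥(V ⊓ (W ⊓ K)) := by omega
  have hne : V ⊓ (W ⊓ K) ≠ ⊥ := by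
    intro hbot
    rw [hbot, finrank_bot] at hpos
    exact Nat.lt_irrefl 0 hpos
  obtain ⟨v, hvmem, hv0⟩ := (Submodule.ne_bot_iff _).mp hne
  obtain ⟨hvV, hvW, hvK⟩ : v ∈ V ∧ v ∈ W ∧ v ∈ K := by
    simpa using hvmem
  set UA := (hA.eigenvectorUnitary : Matrix (Fin N) (Fin N) ℂ) with hUA
  set UB := (hB.eigenvectorUnitary : Matrix (Fin N) (Fin N) ℂ) with hUB
  set wA := star UA *ᵥ v with hwA
  set wB := star UB *ᵥ v with hwB
  have hvVc : ∀ i ∉ sA, wA i = 0 := by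
    intro i hi
    exact (Submodule.mem_comap.mp hvV) i hi
  have hvWc : ∀ i ∉ sB, wB i = 0 := by
    intro i hi
    exact (Submodule.mem_comap.mp hvW) i hi
  have hAB : A *ᵥ v = B *ᵥ v := by
    have h : (A - B).mulVecLin v = 0 := hvK
    rw [Matrix.mulVecLin_apply, Matrix.sub_mulVec, sub_eq_zero] at h
    exact h
  have heq : ∑ i, hA.eigenvalues i * Complex.normSq (wA i)
      = ∑ i, hB.eigenvalues i * Complex.normSq (wB i) := by
    have qa := quad hA v
    have qb := quad hB v
    rw [hAB, qb] at qa
    exact_mod_cast qa.symm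
  have hsum : 0 < ∑ i, Complex.normSq (v i) := by
    obtain ⟨j, hj⟩ : ∃ j, v j ≠ 0 := by
      by_contra h
      push_neg at h
      exact hv0 (funext h)
    exact Finset.sum_pos' (fun i _ => Complex.normSq_nonneg _)
      ⟨j, Finset.mem_univ j, Complex.normSq_pos.mpr hj⟩
  have hupper : ∑ i, hA.eigenvalues i * Complex.normSq (wA i)
      ≤ x * ∑ i, Complex.normSq (v i) := by
    calc ∑ i, hA.eigenvalues i * Complex.normSq (wA i)
        ≤ ∑ i, x * Complex.normSq (wA i) := by
          refine Finset.sum_le_sum fun i _ => ?_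
          by_cases hi : i ∈ sA
          · have hx : hA.eigenvalues i ≤ x := (Finset.mem_filter.mp hi).2
            exact mul_le_mul_of_nonneg_right hx (Complex.normSq_nonneg _)
          · rw [hvVc i hi]
            simp
      _ = x * ∑ i, Complex.normSq (wA i) := by rw [Finset.mul_sum]
      _ = x * ∑ i, Complex.normSq (v i) := by rw [hwA, hUA, norm_preserved]
  have hwBsum : ∑ i, Complex.normSq (wB i) = ∑ i, Complex.normSq (v i) := by
    rw [hwB, hUB, norm_preserved]
  have hlower : x * ∑ i, Complex.normSq (v i)
      < ∑ i, hB.eigenvalues i * Complex.normSq (wB i) := by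
    obtain ⟨j, hj⟩ : ∃ j, wB j ≠ 0 := by
      by_contra h
      push_neg at h
      have : ∑ i, Complex.normSq (wB i) = 0 := by
        simp [h]
      rw [hwBsum] at this
      linarith
    have hjB : j ∈ sB := by
      by_contra h
      exact hj (hvWc j h)
    have hxj : x < hB.eigenvalues j := (Finset.mem_filter.mp hjB).2
    calc x * ∑ i, Complex.normSq (v i)
        = ∑ i, x * Complex.normSq (wB i) := by rw [← hwBsum, Finset.mul_sum]
      _ < ∑ i, hB.eigenvalues i * Complex.normSq (wB i) := by
          refine Finset.sum_lt_sum (fun i _ => ?_) ⟨j, Finset.mem_univ j, ?_⟩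
          · by_cases hi : i ∈ sB
            · have hx : x < hB.eigenvalues i := (Finset.mem_filter.mp hi).2
              exact mul_le_mul_of_nonneg_right hx.le (Complex.normSq_nonneg _)
            · rw [hvWc i hi]
              simp
          · exact mul_lt_mul_of_pos_right hxj (Complex.normSq_pos.mpr hj)
  linarith

end RankIneqAux

/-- The rank inequality: for `N × N` Hermitian matrices `A` and `B` with empirical
spectral distributions `F^A` and `F^B` (eigenvalues counted with multiplicity),
`sup_x |F^A(x) - F^B(x)| ≤ rank (A - B) / N`. -/
theorem rank_inequality
    (N : ℕ) (A B : Matrix (Fin N) (Fin N) ℂ)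
    (hA : A.IsHermitian) (hB : B.IsHermitian) :
    ∀ x : ℝ,
      |((Finset.univ.filter (fun i : Fin N => hA.eigenvalues i ≤ x)).card : ℝ) / N -
          ((Finset.univ.filter (fun i : Fin N => hB.eigenvalues i ≤ x)).card : ℝ) / N|
        ≤ ((A - B).rank : ℝ) / N := by
  intro x
  rcases Nat.eq_zero_or_pos N with h0 | hN
  · subst h0
    simp
  · have hN' : (0:ℝ) < N := by exact_mod_cast hN
    have h1 := RankIneqAux.core N A B hA hB x
    have h2 := RankIneqAux.core N B A hB hA x
    rw [show B - A = -(A - B) by abel, RankIneqAux.rank_neg'] at h2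
    rw [div_sub_div_same, abs_div, abs_of_pos hN']
    refine div_le_div_of_nonneg_right ?_ hN'.le
    
    rw [abs_sub_le_iff]
    constructor
    · have : ((Finset.univ.filter (fun i : Fin N => hA.eigenvalues i ≤ x)).card : ℝ) ≤
        ((Finset.univ.filter (fun i : Fin N => hB.eigenvalues i ≤ x)).card : ℝ) + (A - B).rank := by
        exact_mod_cast h1
      linarith
    · have : ((Finset.univ.filter (fun i : Fin N => hB.eigenvalues i ≤ x)).card : ℝ) ≤
        ((Finset.univ.filter (fun i : Fin N => hA.eigenvalues i ≤ x)).card : ℝ) + (A - B).rank := by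
        exact_mod_cast h2
      linarith

end
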